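/- arXiv:1709.06142 — 3 statements merged into one kernel-verified Lean document; each statement's English description precedes it below -/
import Mathlib

section
/- Let K ≥ 2 and N ≥ 1 be coprime integers and let b = (b_1,…,b_K) be an ordered K-partition of N. Then, as vectors in ℝ^K, P_{𝟙⊥}ψ(b) − (N/K)ρ = −M·B·b, where b is regarded as a column vector in ℝ^K. -/
open scoped BigOperators

/-- Cyclic successor on `Fin K`. -/
def cycSucc {K : ℕ} (i : Fin K) : Fin K := ⟨((i : ℕ) + 1) % K, Nat.mod_lt _ i.pos⟩

/-- The K×K matrix B with B_{ij} = (1/(2K))(−(K−1) + 2·((j−i) mod K)). -/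
noncomputable def Bmat (K : ℕ) : Matrix (Fin K) (Fin K) ℝ :=
  Matrix.of fun i j => (1 / (2 * (K : ℝ))) * (-((K : ℝ) - 1) + 2 * (((j - i : Fin K) : ℕ) : ℝ))

/-- The cyclic shift permutation matrix, M_{ij} = 1 iff j ≡ i+1 (mod K). -/
def Mmat (K : ℕ) : Matrix (Fin K) (Fin K) ℝ :=
  Matrix.of fun i j => if j = cycSucc i then 1 else 0

/-- The all-ones K×K matrix. -/
def Jmat (K : ℕ) : Matrix (Fin K) (Fin K) ℝ := Matrix.of fun _ _ => 1

/-- Orthogonal projection onto the hyperplane orthogonal to (1,…,1). -/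
noncomputable def Pperp (K : ℕ) : Matrix (Fin K) (Fin K) ℝ := 1 - ((K : ℝ))⁻¹ • Jmat K

/-- ψ(b) with i-th entry N − (b_1 + ⋯ + b_i)  (0-indexed). -/
noncomputable def psiVec (K N : ℕ) (b : Fin K → ℕ) : Fin K → ℝ :=
  fun i => (N : ℝ) - ∑ j ∈ Finset.Iic i, (b j : ℝ)

/-- ρ = (1/2)(K−1, K−3, …, 1−K). -/
noncomputable def rhoVec (K : ℕ) : Fin K → ℝ := fun i => ((K : ℝ) - 1 - 2 * (i : ℕ)) / 2

lemma key_nat (K : ℕ) (hK : 2 ≤ K) (i j : Fin K) :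
    ((j - cycSucc i : Fin K) : ℕ)
      = if (j : ℕ) ≤ (i : ℕ) then K - 1 + j - i else (j : ℕ) - i - 1 := by
  have hi := i.isLt
  have hj := j.isLt
  have hs : (cycSucc i : ℕ) = ((i : ℕ) + 1) % K := rfl
  rw [Fin.sub_def]
  simp only [hs]
  rcases Nat.lt_or_ge ((i : ℕ) + 1) K with h | h
  · rw [Nat.mod_eq_of_lt h]
    by_cases hji : (j : ℕ) ≤ (i : ℕ)
    · rw [if_pos hji, Nat.mod_eq_of_lt (by omega)]
      omega
    · rw [if_neg hji]
      have h1 : K ≤ K - ((i : ℕ) + 1) + (j : ℕ) := by omega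
      rw [Nat.mod_eq_sub_mod h1, Nat.mod_eq_of_lt (by omega)]
      omega
  · have hiK : (i : ℕ) = K - 1 := by omega
    have : ((i : ℕ) + 1) % K = 0 := by
      have : (i : ℕ) + 1 = K := by omega
      simp [this]
    rw [this]
    have : (K - 0 + (j : ℕ)) % K = (j : ℕ) := by
      rw [Nat.sub_zero, Nat.add_comm, Nat.add_mod_right, Nat.mod_eq_of_lt hj]
    rw [this, if_pos (by omega)]
    omega

theorem proj_psi_eq_neg_MBb (K N : ℕ) (hK : 2 ≤ K) (hN : 1 ≤ N)
    (hcop : Nat.Coprime K N) (b : Fin K → ℕ) (hb : ∑ i, b i = N) :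
    (Pperp K).mulVec (psiVec K N b) - ((N : ℝ) / K) • rhoVec K
      = -((Mmat K * Bmat K).mulVec (fun j => (b j : ℝ))) := by
  have hKne : (K : ℝ) ≠ 0 := by positivity
  have hbR : (N : ℝ) = ∑ j, (b j : ℝ) := by exact_mod_cast hb.symm
  funext i
  have hA : (Pperp K).mulVec (psiVec K N b) i
      = psiVec K N b i - (K : ℝ)⁻¹ * ∑ k, psiVec K N b k := by
    simp only [Pperp, Matrix.sub_mulVec, Matrix.smul_mulVec, Pi.sub_apply,
      Pi.smul_apply, smul_eq_mul, Matrix.one_mulVec]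
    congr 1
    simp [Jmat, Matrix.mulVec, dotProduct]
  have hB : (Mmat K * Bmat K).mulVec (fun j => (b j : ℝ)) i
      = ∑ j, Bmat K (cycSucc i) j * (b j : ℝ) := by
    rw [← Matrix.mulVec_mulVec]
    simp [Mmat, Matrix.mulVec, dotProduct, Finset.sum_ite_eq',
      Bmat, ite_mul]
  have hpsi : ∀ k, psiVec K N b k = ∑ j, (if j ≤ k then 0 else (b j : ℝ)) := by
    intro k
    rw [psiVec, hbR]
    have h1 : ∑ j ∈ Finset.Iic k, (b j : ℝ)
        = ∑ j, (if j ≤ k then (b j : ℝ) else 0) := by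
      rw [← Finset.sum_filter]
      congr 1
      ext j
      simp
    rw [h1, ← Finset.sum_sub_distrib]
    refine Finset.sum_congr rfl fun j _ => ?_
    split_ifs <;> ring
  have hsumpsi : ∑ k, psiVec K N b k = ∑ j : Fin K, ((j : ℕ) : ℝ) * (b j : ℝ) := by
    simp only [hpsi]
    rw [Finset.sum_comm]
    refine Finset.sum_congr rfl fun j _ => ?_
    rw [Finset.sum_ite, Finset.sum_const_zero, Finset.sum_const, zero_add, nsmul_eq_mul]
    have h2 : (Finset.univ.filter fun k => ¬ j ≤ k) = Finset.Iio j := by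
      ext k; simp [not_le]
    rw [h2, Fin.card_Iio]
  simp only [Pi.sub_apply, Pi.smul_apply, Pi.neg_apply, smul_eq_mul]
  rw [hA, hB, hpsi i, hsumpsi, hbR]
  simp only [rhoVec]
  rw [Finset.mul_sum, div_mul_eq_mul_div, Finset.sum_mul, Finset.sum_div,
    ← Finset.sum_neg_distrib, ← Finset.sum_sub_distrib, ← Finset.sum_sub_distrib]
  refine Finset.sum_congr rfl fun j _ => ?_
  simp only [Bmat, Matrix.of_apply]
  rw [key_nat K hK i j]
  have hi := i.isLt
  have hj := j.isLt
  by_cases hji : (j : ℕ) ≤ (i : ℕ)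
  · rw [if_pos hji, if_pos (Fin.le_def.mpr hji),
      Nat.cast_sub (by omega : (i : ℕ) ≤ K - 1 + (j : ℕ)), Nat.cast_add,
      Nat.cast_sub (by omega : 1 ≤ K), Nat.cast_one]
    field_simp
    ring
  · rw [if_neg hji, if_neg (fun h => hji (Fin.le_def.mp h)),
      Nat.cast_sub (by omega : 1 ≤ (j : ℕ) - (i : ℕ)),
      Nat.cast_sub (by omega : (i : ℕ) ≤ (j : ℕ)), Nat.cast_one]
    field_simp
    ring
end

section
/- Let K ≥ 2 be an integer. Then the matrix B satisfies B(M − I) = (M − I)B = I − (1/K)J, B·𝟙 = 0, and BM = MB, where I is the K×K identity matrix, J is the K×K all-ones matrix, and 𝟙 = (1,…,1) ∈ ℝ^K. -/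
open scoped BigOperators

theorem Bmat_properties (K : ℕ) (hK : 2 ≤ K) :
    Bmat K * (Mmat K - 1) = (Mmat K - 1) * Bmat K ∧
    Bmat K * (Mmat K - 1) = 1 - ((K : ℝ))⁻¹ • Jmat K ∧
    (Bmat K).mulVec (fun _ => (1 : ℝ)) = 0 ∧
    Bmat K * Mmat K = Mmat K * Bmat K := by
  obtain ⟨n, rfl⟩ : ∃ n, K = n + 1 := ⟨K - 1, by omega⟩
  set K := n + 1 with hKdef
  have hn : 1 ≤ n := by omega
  have hKR : (K : ℝ) ≠ 0 := by positivity
  have hcyc : ∀ k : Fin K, cycSucc k = k + 1 := by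
    intro k
    apply Fin.ext
    simp [cycSucc, Fin.add_def, Fin.val_one', Nat.mod_eq_of_lt (show 1 < K by omega)]
  -- B*M entry
  have hBM : ∀ i j : Fin K, (Bmat K * Mmat K) i j = Bmat K i (j - 1) := by
    intro i j
    rw [Matrix.mul_apply]
    simp only [Mmat, Matrix.of_apply, hcyc, mul_ite, mul_one, mul_zero]
    have hcond : ∀ k : Fin K, (j = k + 1) = (k = j - 1) := by
      intro k
      simp [eq_comm (a := j), eq_sub_iff_add_eq]
    simp only [hcond]
    rw [Finset.sum_ite_eq' Finset.univ (j - 1) (fun k => Bmat K i k)]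
    simp
  have hMB : ∀ i j : Fin K, (Mmat K * Bmat K) i j = Bmat K (i + 1) j := by
    intro i j
    rw [Matrix.mul_apply]
    simp only [Mmat, Matrix.of_apply, hcyc, ite_mul, one_mul, zero_mul]
    have hcond : ∀ k : Fin K, (k = i + 1) = (k = i + 1) := fun _ => rfl
    rw [Finset.sum_ite_eq' Finset.univ (i + 1) (fun k => Bmat K k j)]
    simp
  -- equality of shifted entries
  have hEnt : ∀ i j : Fin K, Bmat K i (j - 1) = Bmat K (i + 1) j := by
    intro i j
    simp only [Bmat, Matrix.of_apply]
    have : j - 1 - i = j - (i + 1) := by rw [sub_sub, add_comm (1 : Fin K) i]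
    rw [this]
  -- closed form of the difference
  have hForm : ∀ i j : Fin K,
      Bmat K i (j - 1) - Bmat K i j = (if i = j then 1 else 0) - ((K : ℝ))⁻¹ := by
    intro i j
    simp only [Bmat, Matrix.of_apply]
    have hsub : j - 1 - i = (j - i) - 1 := sub_right_comm j 1 i
    rw [hsub]
    set d : Fin K := j - i with hd
    have hcoe : ((d - 1 : Fin K) : ℕ) = if d = 0 then n else (d : ℕ) - 1 :=
      Fin.coe_sub_one d
    have hij : (i = j) ↔ (d = 0) := by
      rw [hd, sub_eq_zero, eq_comm]
    by_cases h0 : d = 0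
    · rw [if_pos (hij.mpr h0), hcoe, if_pos h0, h0]
      simp only [Fin.val_zero, Nat.cast_zero]
      have hKc : ((K : ℝ)) = (n : ℝ) + 1 := by push_cast [hKdef]; ring
      rw [hKc]
      have hn0 : (n : ℝ) + 1 ≠ 0 := by positivity
      field_simp
      ring
    · rw [if_neg (fun h => h0 (hij.mp h))]
      rw [hcoe, if_neg h0]
      have hd1 : 1 ≤ (d : ℕ) := by
        rcases Nat.eq_zero_or_pos (d : ℕ) with h | h
        · exact absurd (Fin.ext (by simp [h])) h0
        · exact h
      have hcast : (((d : ℕ) - 1 : ℕ) : ℝ) = ((d : ℕ) : ℝ) - 1 := by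
        push_cast [Nat.cast_sub hd1]; ring
      rw [hcast]
      field_simp
      ring
  -- row sums
  have hsumval : (∑ d : Fin K, (((d : ℕ) : ℝ))) * 2 = (K : ℝ) * ((K : ℝ) - 1) := by
    have h1 : (∑ d : Fin K, ((d : ℕ))) * 2 = K * (K - 1) := by
      rw [Fin.sum_univ_eq_sum_range (fun x => x) K]
      exact Finset.sum_range_id_mul_two K
    have h2 := congrArg (fun m : ℕ => (m : ℝ)) h1
    push_cast [Nat.cast_sub (show 1 ≤ K by omega)] at h2
    have hKc : ((K : ℝ)) = (n : ℝ) + 1 := by push_cast [hKdef]; ring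
    rw [hKc]
    convert h2 using 2 <;> rw [hKc]
  have hrow : ∀ i : Fin K, ∑ j : Fin K, Bmat K i j = 0 := by
    intro i
    simp only [Bmat, Matrix.of_apply]
    rw [← Finset.mul_sum]
    have hre : ∑ j : Fin K, (-((K : ℝ) - 1) + 2 * (((j - i : Fin K) : ℕ) : ℝ))
        = (K : ℝ) * (-((K : ℝ) - 1)) + 2 * (∑ d : Fin K, (((d : ℕ) : ℝ))) := by
      rw [Finset.sum_add_distrib, Finset.sum_const, ← Finset.mul_sum]
      have hbij : ∑ j : Fin K, ((((j - i : Fin K) : ℕ) : ℝ))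
          = ∑ d : Fin K, (((d : ℕ) : ℝ)) := by
        exact Fintype.sum_equiv (Equiv.subRight i) _ _ (fun j => rfl)
      rw [hbij]
      simp [Finset.card_univ, mul_comm]
    rw [hre]
    have : (K : ℝ) * (-((K : ℝ) - 1)) + 2 * (∑ d : Fin K, (((d : ℕ) : ℝ))) = 0 := by
      nlinarith [hsumval]
    rw [this, mul_zero]
  -- assemble
  have hcomm : Bmat K * Mmat K = Mmat K * Bmat K := by
    ext i j
    rw [hBM, hMB, hEnt]
  have hmain : Bmat K * (Mmat K - 1) = 1 - ((K : ℝ))⁻¹ • Jmat K := by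
    ext i j
    rw [Matrix.mul_sub, Matrix.mul_one, Matrix.sub_apply, hBM]
    rw [Matrix.sub_apply, Matrix.smul_apply]
    rw [hForm i j]
    simp [Matrix.one_apply, Jmat]
  have hmain2 : (Mmat K - 1) * Bmat K = 1 - ((K : ℝ))⁻¹ • Jmat K := by
    ext i j
    rw [Matrix.sub_mul, Matrix.one_mul, Matrix.sub_apply, hMB, ← hEnt]
    rw [Matrix.sub_apply, Matrix.smul_apply]
    rw [hForm i j]
    simp [Matrix.one_apply, Jmat]
  refine ⟨hmain.trans hmain2.symm, hmain, ?_, hcomm⟩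
  funext i
  simp only [Matrix.mulVec, dotProduct, mul_one, Pi.zero_apply]
  exact hrow i
end

section
/- Let K ≥ 2 be an integer. If X is a K×K real matrix satisfying X(M − I) = (M − I)X = I − (1/K)J and X·𝟙 = 0, where I is the identity matrix, J the all-ones matrix and 𝟙 = (1,…,1), then X = B. That is, B is the unique matrix with these properties. -/
open scoped BigOperators

lemma sub_one_val (K : ℕ) [NeZero K] (hK : 2 ≤ K) (a : Fin K) :
    ((a - 1 : Fin K) : ℕ) = if a = 0 then K - 1 else (a : ℕ) - 1 := by
  have h1 : ((1 : Fin K) : ℕ) = 1 := by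
    rw [Fin.val_one']; exact Nat.mod_eq_of_lt (by omega)
  have ha : (a : ℕ) < K := a.isLt
  have h0 : (a = 0) ↔ ((a:ℕ) = 0) := ⟨fun h => by subst h; rfl, fun h => Fin.ext h⟩
  have hv : ((a - 1 : Fin K) : ℕ) = (K - 1 + (a:ℕ)) % K := by rw [Fin.sub_def, h1]
  rw [hv]
  rcases Nat.eq_zero_or_pos (a : ℕ) with h | h
  · rw [if_pos (h0.mpr h), h, Nat.add_zero]
    exact Nat.mod_eq_of_lt (by omega)
  · rw [if_neg (fun hh => absurd (h0.mp hh) (by omega)),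
      show K - 1 + (a:ℕ) = K + ((a:ℕ) - 1) by omega, Nat.add_mod_left]
    exact Nat.mod_eq_of_lt (by omega)

lemma cycSucc_eq_add_one (K : ℕ) [NeZero K] (hK : 2 ≤ K) (i : Fin K) :
    cycSucc i = i + 1 := by
  have h1 : ((1 : Fin K) : ℕ) = 1 := by
    rw [Fin.val_one']; exact Nat.mod_eq_of_lt (by omega)
  apply Fin.ext
  rw [Fin.add_def, h1]
  rfl

/-- The key scalar identity for the B recurrence. -/
lemma Bkey (K : ℕ) [NeZero K] (hK : 2 ≤ K) (a : Fin K) :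
    (1 / (2 * (K : ℝ))) * (-((K : ℝ) - 1) + 2 * (((a - 1 : Fin K) : ℕ) : ℝ))
      - (1 / (2 * (K : ℝ))) * (-((K : ℝ) - 1) + 2 * ((a : ℕ) : ℝ))
    = (if a = 0 then 1 else 0) - (K : ℝ)⁻¹ := by
  have hKR : (K : ℝ) ≠ 0 := Nat.cast_ne_zero.mpr (by omega)
  rcases eq_or_ne a 0 with h | h
  · rw [sub_one_val K hK, if_pos h, if_pos h, h]
    rw [show ((0 : Fin K) : ℕ) = 0 from rfl, Nat.cast_sub (by omega), Nat.cast_zero,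
      Nat.cast_one]
    field_simp
    ring
  · rw [sub_one_val K hK, if_neg h, if_neg h]
    have h0 : 1 ≤ (a : ℕ) := by
      have : (a : ℕ) ≠ 0 := fun hh => h (Fin.ext hh)
      omega
    rw [Nat.cast_sub h0, Nat.cast_one]
    field_simp
    ring

theorem Bmat_unique (K : ℕ) (hK : 2 ≤ K) (X : Matrix (Fin K) (Fin K) ℝ)
    (h1 : X * (Mmat K - 1) = 1 - ((K : ℝ))⁻¹ • Jmat K)
    (h2 : (Mmat K - 1) * X = 1 - ((K : ℝ))⁻¹ • Jmat K)
    (h3 : X.mulVec (fun _ => (1 : ℝ)) = 0) :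
    X = Bmat K := by
  haveI : NeZero K := ⟨by omega⟩
  have hKR : (K : ℝ) ≠ 0 := Nat.cast_ne_zero.mpr (by omega)
  -- entrywise row recurrence for X
  have hrow : ∀ i j, X (i + 1) j - X i j = (if i = j then 1 else 0) - (K : ℝ)⁻¹ := by
    intro i j
    have h := congrFun (congrFun h2 i) j
    simp only [Matrix.sub_mul, Matrix.sub_apply, Matrix.mul_apply, Mmat, Matrix.of_apply,
      Matrix.one_mul, Matrix.one_apply, Matrix.smul_apply, Jmat, smul_eq_mul, mul_one,
      cycSucc_eq_add_one K hK, sub_mul, ite_mul, one_mul, zero_mul,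
      Finset.sum_sub_distrib, Finset.sum_ite_eq', Finset.sum_ite_eq, Finset.mem_univ,
      if_true] at h
    simpa using h
  -- entrywise column recurrence for X
  have hcol : ∀ i j, X i (j - 1) - X i j = (if i = j then 1 else 0) - (K : ℝ)⁻¹ := by
    intro i j
    have h := congrFun (congrFun h1 i) j
    simp only [Matrix.mul_sub, Matrix.sub_apply, Matrix.mul_apply, Mmat, Matrix.of_apply,
      Matrix.mul_one, Matrix.one_apply, Matrix.smul_apply, Jmat, smul_eq_mul, mul_one,
      cycSucc_eq_add_one K hK] at h
    have hcond : ∀ k : Fin K, (j = k + 1) = (k = j - 1) := by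
      intro k
      apply propext
      constructor
      · intro hh; rw [hh]; abel
      · intro hh; rw [hh]; abel
    simp only [hcond, mul_sub, mul_ite, mul_one, mul_zero, Finset.sum_sub_distrib,
      Finset.sum_ite_eq', Finset.mem_univ, if_true] at h
    simpa using h
  -- entrywise row recurrence for B
  have hBrow : ∀ i j, Bmat K (i + 1) j - Bmat K i j = (if i = j then 1 else 0) - (K : ℝ)⁻¹ := by
    intro i j
    have hsub : (j - (i + 1) : Fin K) = (j - i) - 1 := by abel
    simp only [Bmat, Matrix.of_apply, hsub]
    rw [Bkey K hK (j - i)]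
    congr 1
    congr 1
    apply propext
    rw [sub_eq_zero]
    exact ⟨fun hh => hh.symm, fun hh => hh.symm⟩
  -- entrywise column recurrence for B
  have hBcol : ∀ i j, Bmat K i (j - 1) - Bmat K i j = (if i = j then 1 else 0) - (K : ℝ)⁻¹ := by
    intro i j
    have hsub : ((j - 1) - i : Fin K) = (j - i) - 1 := by abel
    simp only [Bmat, Matrix.of_apply, hsub]
    rw [Bkey K hK (j - i)]
    congr 1
    congr 1
    apply propext
    rw [sub_eq_zero]
    exact ⟨fun hh => hh.symm, fun hh => hh.symm⟩
  -- row sums of B vanish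
  have hS : (2 : ℝ) * ∑ a : Fin K, ((a : ℕ) : ℝ) = (K : ℝ) * ((K : ℝ) - 1) := by
    have hnat : (∑ a : Fin K, (a : ℕ)) * 2 = K * (K - 1) := by
      rw [show (∑ a : Fin K, (a : ℕ)) = ∑ i ∈ Finset.range K, i from
        Fin.sum_univ_eq_sum_range (fun i => i) K]
      exact Finset.sum_range_id_mul_two K
    have hc := congrArg (Nat.cast : ℕ → ℝ) hnat
    push_cast [Nat.cast_sub (by omega : 1 ≤ K)] at hc
    linarith
  have hBsum : ∀ i, ∑ j, Bmat K i j = 0 := by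
    intro i
    have hbij : ∑ j : Fin K, (((j - i : Fin K) : ℕ) : ℝ) = ∑ a : Fin K, ((a : ℕ) : ℝ) :=
      Fintype.sum_equiv (Equiv.subRight i) _ _ (fun j => rfl)
    simp only [Bmat, Matrix.of_apply]
    rw [← Finset.mul_sum, Finset.sum_add_distrib, Finset.sum_const, Finset.card_univ,
      Fintype.card_fin, ← Finset.mul_sum, hbij]
    rw [nsmul_eq_mul]
    have : (K : ℝ) * -((K : ℝ) - 1) + 2 * ∑ a : Fin K, ((a : ℕ) : ℝ) = 0 := by
      rw [hS]; ring
    rw [this, mul_zero]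
  -- the difference is constant along rows and columns
  have hDrow : ∀ i j, X (i + 1) j - Bmat K (i + 1) j = X i j - Bmat K i j := by
    intro i j
    have h := hrow i j
    have hb := hBrow i j
    linarith
  have hDcol : ∀ i j, X i (j + 1) - Bmat K i (j + 1) = X i j - Bmat K i j := by
    intro i j
    have h := hcol i (j + 1)
    have hb := hBcol i (j + 1)
    rw [add_sub_cancel_right] at h hb
    linarith
  open Fin.NatCast in
  have hr : ∀ (m : ℕ) (j : Fin K), X (m : Fin K) j - Bmat K (m : Fin K) j
      = X 0 j - Bmat K 0 j := by
    intro m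
    induction m with
    | zero => intro j; norm_num
    | succ n ih =>
        intro j
        rw [show ((n + 1 : ℕ) : Fin K) = (n : Fin K) + 1 by exact Nat.cast_succ n, hDrow]
        exact ih j
  open Fin.NatCast in
  have hc : ∀ (m : ℕ) (i : Fin K), X i (m : Fin K) - Bmat K i (m : Fin K)
      = X i 0 - Bmat K i 0 := by
    intro m
    induction m with
    | zero => intro i; norm_num
    | succ n ih =>
        intro i
        rw [show ((n + 1 : ℕ) : Fin K) = (n : Fin K) + 1 by exact Nat.cast_succ n, hDcol]
        exact ih i
  open Fin.NatCast in
  have hconst : ∀ i j, X i j - Bmat K i j = X 0 0 - Bmat K 0 0 := by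
    intro i j
    calc X i j - Bmat K i j = X 0 j - Bmat K 0 j := by
          rw [← Fin.cast_val_eq_self i]; exact hr i j
      _ = X 0 0 - Bmat K 0 0 := by
          rw [← Fin.cast_val_eq_self j]; exact hc j 0
  -- row sums of X vanish
  have hXsum : ∀ i, ∑ j, X i j = 0 := by
    intro i
    have h := congrFun h3 i
    simpa [Matrix.mulVec, dotProduct] using h
  -- conclude the constant is zero
  have hc0 : X 0 0 - Bmat K 0 0 = 0 := by
    have hsum : ∑ j : Fin K, (X 0 j - Bmat K 0 j) = (K : ℝ) * (X 0 0 - Bmat K 0 0) := by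
      rw [Finset.sum_congr rfl (fun j _ => hconst 0 j), Finset.sum_const, Finset.card_univ,
        Fintype.card_fin, nsmul_eq_mul]
    have hz : ∑ j : Fin K, (X 0 j - Bmat K 0 j) = 0 := by
      rw [Finset.sum_sub_distrib, hXsum 0, hBsum 0, sub_zero]
    rw [hz] at hsum
    exact (mul_eq_zero.mp hsum.symm).resolve_left hKR
  ext i j
  have h := hconst i j
  rw [hc0] at h
  linarith
end
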